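/- Let V, A₁, A₂ be points in ℝ² with |VA₁| = |VA₂|, let H be the midpoint of A₁A₂, and let O lie on segment VH with β = ∠A₁VA₂ < α = ∠A₁OA₂ ≤ π. Let P̄ be the intersection of lines A₂O and VA₁, and let P be any point of the open segment V P̄. Set ϑ_A = ∠A₁PO and ϑ_B = ∠A₁PA₂. Then ϑ_B < 2ϑ_A. -/

import Mathlib

open Real EuclideanGeometry
open InnerProductGeometry
open scoped RealInnerProductSpace
set_option maxHeartbeats 1000000


theorem Gpos (σ μ c s : ℝ) (hcs : c^2+s^2=1) (hs : 0 < s) (hσ0 : 0 < σ) (hσ : σ ≤ 1/2)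
    (hμ0 : 0 < μ) (hμ : μ*(1-σ) < σ) :
    0 < σ^2*((c-μ)^2+s^2) - (σ-μ*(1-σ))^2 := by
  have hc1 : c < 1 := by nlinarith
  have key : 0 < 2*σ*(1-σ*(1+c)) + μ*(2*σ-1) := by
    nlinarith [mul_nonneg (le_of_lt hμ0) (by linarith : (0:ℝ) ≤ 1-2*σ),
      mul_lt_mul_of_pos_right hμ (by linarith : (0:ℝ) < 1-2*σ+1),
      sq_nonneg (1-2*σ), mul_pos hσ0 (by linarith : (0:ℝ) < 1-c),
      mul_lt_mul_of_pos_left hμ hσ0]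
  nlinarith [mul_pos hμ0 key]

theorem abstractIneq (X Y D cm s G : ℝ) (hX : 0 < X) (hY : 0 < Y) (hD : 0 < D)
    (hs : 0 < s) (hG : 0 < G)
    (hident : (cm*(X^2+Y^2))^2 - D^2*(Y^2-X^2)^2 = s*G*(2*X*Y*cm + s*(X^2-Y^2)))
    (hsign : Y^2 ≤ X^2 → 0 < cm) :
    0 < D*(Y^2-X^2) + cm*(X^2+Y^2) := by
  have hN : 0 < X^2+Y^2 := by positivity
  rcases lt_or_ge 0 (Y^2-X^2) with hK | hK
  · rcases le_or_gt 0 cm with hM | hM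
    · nlinarith [mul_pos hD hK, mul_nonneg hM (le_of_lt hN)]
    · have hF2 : 2*X*Y*cm + s*(X^2-Y^2) < 0 := by
        nlinarith [mul_pos (mul_pos hX hY) (neg_pos.2 hM), mul_pos hs hK]
      have h2 : (cm*(X^2+Y^2))^2 < D^2*(Y^2-X^2)^2 := by
        nlinarith [mul_pos (mul_pos hs hG) (neg_pos.2 hF2)]
      nlinarith [mul_pos hD hK, mul_pos (neg_pos.2 hM) hN]
  · have hcm : 0 < cm := hsign (by linarith)
    have hF2 : 0 < 2*X*Y*cm + s*(X^2-Y^2) := by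
      nlinarith [mul_pos (mul_pos hX hY) hcm, mul_nonneg hs.le (by linarith : (0:ℝ) ≤ X^2-Y^2)]
    have h2 : D^2*(Y^2-X^2)^2 < (cm*(X^2+Y^2))^2 := by
      nlinarith [mul_pos (mul_pos hs hG) hF2]
    have ha : 0 ≤ D*(X^2-Y^2) := mul_nonneg hD.le (by linarith)
    have hb : 0 < cm*(X^2+Y^2) := mul_pos hcm hN
    nlinarith [h2, ha, hb]

theorem mainineq (σ μ c s D : ℝ) (hcs : c^2+s^2=1) (hs : 0 < s) (hσ0 : 0 < σ) (hσ : σ ≤ 1/2)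
    (hμ0 : 0 < μ) (hμ : μ*(1-σ) < σ) (hD : 0 < D) (hD2 : D^2 = (c-μ)^2+s^2)
    (hX : 0 < σ*(1+c)-μ) :
    0 < D*((σ*s)^2-(σ*(1+c)-μ)^2) + (c-μ)*((σ*(1+c)-μ)^2+(σ*s)^2) := by
  have hc1 : c < 1 := by nlinarith
  have hc1' : -1 < c := by nlinarith
  have hG := Gpos σ μ c s hcs hs hσ0 hσ hμ0 hμ
  apply abstractIneq _ _ _ _ s _ hX (mul_pos hσ0 hs) hD hs hG
  · rw [hD2]; ring
  · intro hK2
    have hXY : σ*s ≤ σ*(1+c)-μ := by nlinarith [mul_pos hσ0 hs]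
    have h1 : σ*s < σ*(1+c) := by linarith
    have h2 : s < 1+c := lt_of_mul_lt_mul_left h1 hσ0.le
    have h3 : s^2 < (1+c)^2 := by nlinarith
    have hc0 : 0 < c := by nlinarith [(by linarith : (0:ℝ) < 1+c)]
    have hs1c : 1-c < s := by nlinarith [mul_pos hc0 (by linarith : (0:ℝ) < 1-c)]
    have hsle : s ≤ 1 := by nlinarith
    have h4 : 0 ≤ 1+c-s := by linarith
    linarith [mul_le_mul_of_nonneg_right hσ h4]


theorem sqrtHelper (D mc s : ℝ) (hD : 0 < D) (hpr : (D-mc)*(D+mc) = s^2) (hs : 0 < s) :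
    mc < D := by nlinarith

theorem keyLemma {E : Type*} [NormedAddCommGroup E] [InnerProductSpace ℝ E]
    (e f : E) (σ μ r c s : ℝ)
    (hr : 0 < r) (he : ‖e‖ = r) (hf : ‖f‖ = r)
    (hef : ⟪e, f⟫ = r*r*c)
    (hs : 0 < s) (hcs : c^2+s^2 = 1)
    (hσ0 : 0 < σ) (hσ : σ ≤ 1/2) (hμ0 : 0 < μ) (hμ : μ*(1-σ) < σ) (hμ1 : μ < 1) :
    InnerProductGeometry.angle ((1-μ)•e) (f - μ•e) < 2 * InnerProductGeometry.angle ((1-μ)•e) ((σ-μ)•e + σ•f) := by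
  have h1μ : (0:ℝ) < 1-μ := by linarith
  rw [InnerProductGeometry.angle_smul_left_of_pos _ _ h1μ, InnerProductGeometry.angle_smul_left_of_pos _ _ h1μ]
  set b := f - μ•e with hbdef
  set o := (σ-μ)•e + σ•f with hodef
  have hee : ⟪e, e⟫ = r*r := by
    rw [real_inner_self_eq_norm_mul_norm, he]
  have hff : ⟪f, f⟫ = r*r := by
    rw [real_inner_self_eq_norm_mul_norm, hf]
  have hfe : ⟪f, e⟫ = r*r*c := by rw [real_inner_comm]; exact hef
  have heb : ⟪e, b⟫ = r*r*(c-μ) := by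
    rw [hbdef, inner_sub_right, real_inner_smul_right, hee, hef]; ring
  have heo : ⟪e, o⟫ = r*r*(σ*(1+c)-μ) := by
    rw [hodef, inner_add_right, real_inner_smul_right, real_inner_smul_right, hee, hef]; ring
  have hDsqpos : 0 < (c-μ)^2 + s^2 :=
    add_pos_of_nonneg_of_pos (sq_nonneg (c-μ)) (pow_pos hs 2)
  set D := Real.sqrt ((c-μ)^2 + s^2) with hDdef
  have hD : 0 < D := Real.sqrt_pos.2 hDsqpos
  have hD2 : D^2 = (c-μ)^2 + s^2 := Real.sq_sqrt hDsqpos.le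
  have hbsq : ‖b‖^2 = (r*r)*((c-μ)^2+s^2) := by
    rw [← real_inner_self_eq_norm_sq, hbdef]
    simp only [inner_sub_left, inner_sub_right, real_inner_smul_left, real_inner_smul_right]
    linear_combination hff - μ*hef - μ*hfe + (μ^2)*hee - (r*r)*hcs
  have hbnorm : ‖b‖ = r * D := by
    have h2 : ‖b‖^2 = (r*D)^2 := by rw [hbsq, mul_pow, hD2]; ring
    calc ‖b‖ = Real.sqrt (‖b‖^2) := (Real.sqrt_sq (norm_nonneg _)).symm
      _ = Real.sqrt ((r*D)^2) := by rw [h2]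
      _ = r*D := Real.sqrt_sq (by positivity)
  set ϑA := InnerProductGeometry.angle e o with hϑAdef
  set ϑB := InnerProductGeometry.angle e b with hϑBdef
  have hA0 : 0 ≤ ϑA := InnerProductGeometry.angle_nonneg _ _
  have hAπ : ϑA ≤ π := InnerProductGeometry.angle_le_pi _ _
  have hB0 : 0 ≤ ϑB := InnerProductGeometry.angle_nonneg _ _
  have hBπ : ϑB ≤ π := InnerProductGeometry.angle_le_pi _ _
  suffices h : ϑB/2 < ϑA by linarith
  have hcosb : Real.cos ϑB = (c-μ)/D := by
    rw [hϑBdef, InnerProductGeometry.cos_angle, heb, he, hbnorm]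
    field_simp
  have hcoshalf : Real.cos (ϑB/2) = Real.sqrt ((1 + Real.cos ϑB)/2) :=
    Real.cos_half (by linarith) hBπ
  have hform : (1 + (c-μ)/D)/2 = (D+(c-μ))/(2*D) := by
    field_simp
  have hDcμ : 0 < D + (c-μ) := by
    have hpr : (D-(μ-c))*(D+(μ-c)) = s^2 := by linear_combination hD2
    have := sqrtHelper D (μ-c) s hD hpr hs
    linarith
  have hrhs : Real.cos (ϑB/2) = Real.sqrt ((D+(c-μ))/(2*D)) := by
    rw [hcoshalf, hcosb, hform]
  have hrhs_pos : 0 < Real.sqrt ((D+(c-μ))/(2*D)) :=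
    Real.sqrt_pos.2 (div_pos hDcμ (by linarith))
  have hmain : Real.cos ϑA < Real.cos (ϑB/2) := by
    rw [hrhs]
    have hcA : Real.cos ϑA = (r*r*(σ*(1+c)-μ))/(r*‖o‖) := by
      rw [hϑAdef, InnerProductGeometry.cos_angle, heo, he]
    rcases le_or_gt (σ*(1+c)-μ) 0 with hX | hX
    · have hnum : r*r*(σ*(1+c)-μ) ≤ 0 :=
        mul_nonpos_of_nonneg_of_nonpos (by positivity) hX
      have : Real.cos ϑA ≤ 0 := by
        rw [hcA]; exact div_nonpos_of_nonpos_of_nonneg hnum (by positivity)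
      linarith
    · have hNpos : 0 < (σ*(1+c)-μ)^2 + (σ*s)^2 :=
        add_pos_of_nonneg_of_pos (sq_nonneg _) (pow_pos (mul_pos hσ0 hs) 2)
      have hosq : ‖o‖^2 = (r*r)*((σ*(1+c)-μ)^2 + (σ*s)^2) := by
        rw [← real_inner_self_eq_norm_sq, hodef]
        simp only [inner_add_left, inner_add_right, real_inner_smul_left, real_inner_smul_right]
        linear_combination ((σ-μ)^2)*hee + (σ*(σ-μ))*hef + (σ*(σ-μ))*hfe + (σ^2)*hff - (r*r*σ^2)*hcs
      set N := (σ*(1+c)-μ)^2 + (σ*s)^2 with hNdef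
      have honorm : ‖o‖ = r * Real.sqrt N := by
        have h2 : ‖o‖^2 = (r*Real.sqrt N)^2 := by
          rw [hosq, mul_pow, Real.sq_sqrt hNpos.le]; ring
        calc ‖o‖ = Real.sqrt (‖o‖^2) := (Real.sqrt_sq (norm_nonneg _)).symm
          _ = Real.sqrt ((r*Real.sqrt N)^2) := by rw [h2]
          _ = r*Real.sqrt N := Real.sqrt_sq (by positivity)
      have hsqrtN : 0 < Real.sqrt N := Real.sqrt_pos.2 hNpos
      have hcA2 : Real.cos ϑA = (σ*(1+c)-μ)/Real.sqrt N := by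
        rw [hcA, honorm]
        field_simp
      have hcAnn : 0 ≤ Real.cos ϑA := by
        rw [hcA2]; positivity
      rw [Real.lt_sqrt hcAnn, hcA2, div_pow, Real.sq_sqrt hNpos.le,
        div_lt_div_iff₀ hNpos (by linarith : (0:ℝ) < 2*D)]
      have hmi := mainineq σ μ c s D hcs hs hσ0 hσ hμ0 hμ hD hD2 hX
      rw [hNdef]
      linarith [hmi]
  have hmemB : ϑB/2 ∈ Set.Icc 0 π := ⟨by linarith, by linarith [Real.pi_pos]⟩
  have hmemA : ϑA ∈ Set.Icc 0 π := ⟨hA0, hAπ⟩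
  exact (Real.strictAntiOn_cos.lt_iff_gt hmemA hmemB).mp hmain


/-- In the isosceles triangle `V A₂ A₁` with `|VA₁| = |VA₂|`, midpoint `H` of `A₁A₂`,
`O` on segment `VH` with `β = ∠A₁VA₂ < α = ∠A₁OA₂ ≤ π`, `P̄` the intersection of
lines `A₂O` and `VA₁`, and `P` on the open segment `V P̄`, the angles
`ϑ_A = ∠A₁PO` and `ϑ_B = ∠A₁PA₂` satisfy `ϑ_B < 2ϑ_A`. -/
theorem stmt5 (V A₁ A₂ H O Pbar P : EuclideanSpace ℝ (Fin 2)) (α β ϑA ϑB : ℝ)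
    (hiso : dist V A₁ = dist V A₂)
    (hH : H = midpoint ℝ A₁ A₂)
    (hO : O ∈ segment ℝ V H)
    (hnd : V ∉ affineSpan ℝ ({A₁, A₂} : Set (EuclideanSpace ℝ (Fin 2))))
    (hβdef : β = ∠ A₁ V A₂)
    (hαdef : α = ∠ A₁ O A₂)
    (hβpos : 0 < β) (hβα : β < α) (hαπ : α ≤ π)
    (hPbar₁ : Pbar ∈ affineSpan ℝ ({A₂, O} : Set (EuclideanSpace ℝ (Fin 2))))
    (hPbar₂ : Pbar ∈ affineSpan ℝ ({V, A₁} : Set (EuclideanSpace ℝ (Fin 2))))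
    (hP : P ∈ openSegment ℝ V Pbar)
    (hϑA : ϑA = ∠ A₁ P O) (hϑB : ϑB = ∠ A₁ P A₂) :
    ϑB < 2 * ϑA := by
  -- basic nondegeneracy
  have hA1V : A₁ ≠ V := by
    rintro rfl
    exact hnd (left_mem_affineSpan_pair ℝ A₁ A₂)
  set e : EuclideanSpace ℝ (Fin 2) := A₁ - V with hedef
  set f : EuclideanSpace ℝ (Fin 2) := A₂ - V with hfdef
  set r : ℝ := ‖e‖ with hrdef
  have hr : 0 < r := by
    rw [hrdef]
    exact norm_pos_iff.2 (sub_ne_zero.2 hA1V)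
  have hfnorm : ‖f‖ = r := by
    rw [hfdef, hrdef, hedef]
    rw [dist_eq_norm, dist_eq_norm] at hiso
    rw [norm_sub_rev V A₂] at hiso
    rw [norm_sub_rev A₁ V]
    exact hiso.symm
  -- angle β
  have hβangle : β = InnerProductGeometry.angle e f := by
    rw [hβdef, hedef, hfdef]
    rfl
  have hβπ : β < π := by
    by_contra hcon
    push_neg at hcon
    have hβeq : β = π := le_antisymm (hβdef ▸ EuclideanGeometry.angle_le_pi A₁ V A₂) hcon
    have hpi : ∠ A₁ V A₂ = π := by rw [← hβdef, hβeq]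
    have hsbtw := EuclideanGeometry.angle_eq_pi_iff_sbtw.mp hpi
    exact hnd hsbtw.wbtw.mem_affineSpan
  set c : ℝ := Real.cos β with hcdef
  set s : ℝ := Real.sin β with hsdef
  have hs : 0 < s := Real.sin_pos_of_pos_of_lt_pi hβpos hβπ
  have hcs : c^2 + s^2 = 1 := by rw [hcdef, hsdef]; exact Real.cos_sq_add_sin_sq β
  have hee : ⟪e, e⟫ = r*r := by rw [real_inner_self_eq_norm_mul_norm]
  have hff : ⟪f, f⟫ = r*r := by rw [real_inner_self_eq_norm_mul_norm, hfnorm]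
  have hef : ⟪e, f⟫ = r*r*c := by
    have h := InnerProductGeometry.cos_angle e f
    rw [← hβangle, hfnorm, ← hrdef, ← hcdef] at h
    rw [eq_div_iff (by positivity : r*r ≠ 0)] at h
    linarith [h]
  have hfe : ⟪f, e⟫ = r*r*c := by rw [real_inner_comm]; exact hef
  -- independence
  have hc2 : c^2 < 1 := by nlinarith
  have hindep : ∀ u v : ℝ, u•e = v•f → u = 0 ∧ v = 0 := by
    intro u v huv
    have h1 : ⟪e, u•e⟫ = ⟪e, v•f⟫ := by rw [huv]
    have h2 : ⟪f, u•e⟫ = ⟪f, v•f⟫ := by rw [huv]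
    rw [real_inner_smul_right, real_inner_smul_right, hee, hef] at h1
    rw [real_inner_smul_right, real_inner_smul_right, hfe, hff] at h2
    have hr2 : (0:ℝ) < r*r := mul_pos hr hr
    have hu : u = v*c := by
      have h3 : (u - v*c)*(r*r) = 0 := by linear_combination h1
      rcases mul_eq_zero.mp h3 with h | h
      · linarith
      · exact absurd h (ne_of_gt hr2)
    have hv : v = u*c := by
      have h3 : (v - u*c)*(r*r) = 0 := by linear_combination -h2
      rcases mul_eq_zero.mp h3 with h | h
      · linarith
      · exact absurd h (ne_of_gt hr2)
    have hu0 : u = 0 := by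
      have h4 : u*(1-c^2) = 0 := by linear_combination hu + c*hv
      rcases mul_eq_zero.mp h4 with h | h
      · exact h
      · nlinarith
    exact ⟨hu0, by rw [hv, hu0]; ring⟩
  -- O on segment
  obtain ⟨a, b, ha, hb, hab, hOsum⟩ := hO
  have hmid : H = ((1:ℝ)/2)•(A₁+A₂) := by
    rw [hH, midpoint_eq_smul_add]
    norm_num
  have hOV : O - V = (b/2)•e + (b/2)•f := by
    have ha' : a = 1 - b := by linarith
    rw [← hOsum, hmid, ha', hedef, hfdef]
    module
  set σ : ℝ := b/2 with hσdef
  have hσle : σ ≤ 1/2 := by rw [hσdef]; linarith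
  have hσ0 : 0 < σ := by
    rcases lt_or_eq_of_le hb with h | h
    · rw [hσdef]; linarith
    · exfalso
      have hOVeq : O = V := by
        have h0 : O - V = 0 := by rw [hOV, hσdef, ← h]; simp
        exact sub_eq_zero.mp h0
      rw [hαdef, hOVeq, ← hβdef] at hβα
      exact lt_irrefl β hβα
  -- Pbar
  have h₂ := hPbar₂
  rw [← vsub_vadd Pbar V] at h₂
  obtain ⟨x, hx⟩ := vadd_left_mem_affineSpan_pair.mp h₂
  have h₁ := hPbar₁
  rw [← vsub_vadd Pbar A₂] at h₁
  obtain ⟨y, hy⟩ := vadd_left_mem_affineSpan_pair.mp h₁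
  simp only [vsub_eq_sub] at hx hy
  rw [← hedef] at hx
  have hOA₂ : O - A₂ = σ•e + (σ - 1)•f := by
    have h5 : O - A₂ = (O - V) - (A₂ - V) := by abel
    rw [h5, hOV, hfdef]
    module
  have hfin : (x - y*σ)•e = (1 + y*(σ-1))•f := by
    have h6 : x•e - f = y•(σ•e + (σ-1)•f) := by
      calc x•e - f = (Pbar - V) - (A₂ - V) := by rw [hx, hfdef]
        _ = Pbar - A₂ := by abel
        _ = y•(O - A₂) := hy.symm
        _ = y•(σ•e + (σ-1)•f) := by rw [hOA₂]
    linear_combination (norm := module) h6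
  obtain ⟨hfin1, hfin2⟩ := hindep _ _ hfin
  have hyval : y*(1-σ) = 1 := by linarith
  have hxval : x*(1-σ) = σ := by
    have hx' : x = y*σ := by linarith
    rw [hx']
    linear_combination σ*hyval
  have hxpos : 0 < x := by
    rcases le_or_gt x 0 with h | h
    · have h9 : x*(1-σ) ≤ 0 := mul_nonpos_iff.2 (Or.inr ⟨h, by linarith⟩)
      linarith
    · exact h
  -- P
  obtain ⟨a', b', ha', hb', hab', hPsum⟩ := hP
  have hPV : P - V = (b'*x)•e := by
    have ha'' : a' = 1 - b' := by linarith
    have h8 : P - V = b'•(Pbar - V) := by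
      rw [← hPsum, ha'']
      module
    rw [h8, ← hx]
    module
  set μ : ℝ := b'*x with hμdef
  have hμ0 : 0 < μ := mul_pos hb' hxpos
  have hμ : μ*(1-σ) < σ := by
    have hb'1 : b' < 1 := by linarith
    calc μ*(1-σ) = b'*(x*(1-σ)) := by rw [hμdef]; ring
      _ = b'*σ := by rw [hxval]
      _ < 1*σ := by exact mul_lt_mul_of_pos_right hb'1 hσ0
      _ = σ := one_mul σ
  have hμ1 : μ < 1 := by
    have h10 : 0 ≤ μ*(1/2 - σ) := mul_nonneg hμ0.le (by linarith)
    linarith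
  -- vectors at P
  have hA1P : A₁ -ᵥ P = (1-μ)•e := by
    rw [vsub_eq_sub]
    have h7 : A₁ - P = e - (P - V) := by rw [hedef]; abel
    rw [h7, hPV]
    module
  have hA2P : A₂ -ᵥ P = f - μ•e := by
    rw [vsub_eq_sub]
    have h7 : A₂ - P = f - (P - V) := by rw [hfdef]; abel
    rw [h7, hPV]
  have hOP : O -ᵥ P = (σ-μ)•e + σ•f := by
    rw [vsub_eq_sub]
    have h7 : O - P = (O - V) - (P - V) := by abel
    rw [h7, hOV, hPV]
    module
  have hgB : ϑB = InnerProductGeometry.angle ((1-μ)•e) (f - μ•e) := by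
    rw [hϑB, EuclideanGeometry.angle, hA1P, hA2P]
  have hgA : ϑA = InnerProductGeometry.angle ((1-μ)•e) ((σ-μ)•e + σ•f) := by
    rw [hϑA, EuclideanGeometry.angle, hA1P, hOP]
  rw [hgB, hgA]
  exact keyLemma e f σ μ r c s hr rfl hfnorm hef hs hcs hσ0 hσle hμ0 hμ hμ1
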